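/- Under the setup with s₁₂ = −s₂₁, s₁₂₃ = −s₂₁₃, bᵢⱼ = Rᵢᵀ sᵢⱼ, bᵢⱼₖ = Rᵢᵀ sᵢⱼₖ, and positive constants k^α, k^β, the relative attitude error vector e₂₁ = k^α ((Q₂₁^d)ᵀ b₁₂) × b₂₁ + k^β ((Q₂₁^d)ᵀ b₁₂₃) × b₂₁₃ satisfies hat(e₂₁) = (Q₂₁^d)ᵀ R₁ᵀ K₂₁ R₂ − R₂ᵀ K₂₁ R₁ Q₂₁^d, where K₂₁ = k^α s₂₁ s₂₁ᵀ + k^β s₂₁₃ s₂₁₃ᵀ. -/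

import Mathlib

open Matrix

noncomputable def hat (x : Fin 3 → ℝ) : Matrix (Fin 3) (Fin 3) ℝ :=
  !![0, -x 2, x 1; x 2, 0, -x 0; -x 1, x 0, 0]

noncomputable def vee (A : Matrix (Fin 3) (Fin 3) ℝ) : Fin 3 → ℝ := ![A 2 1, A 0 2, A 1 0]

def IsSO3 (R : Matrix (Fin 3) (Fin 3) ℝ) : Prop := Rᵀ * R = 1 ∧ R.det = 1

noncomputable def enorm3 (x : Fin 3 → ℝ) : ℝ := Real.sqrt (∑ i, x i ^ 2)

lemma hat_cross (a b : Fin 3 → ℝ) :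
    hat (a ⨯₃ b) = vecMulVec b a - vecMulVec a b := by
  ext i j
  fin_cases i <;> fin_cases j <;>
    simp [hat, crossProduct, vecMulVec_apply] <;> ring

lemma hat_lin (c d : ℝ) (x y : Fin 3 → ℝ) :
    hat (c • x + d • y) = c • hat x + d • hat y := by
  ext i j
  fin_cases i <;> fin_cases j <;> simp [hat] <;> ring

lemma vmv_mulVec (A B : Matrix (Fin 3) (Fin 3) ℝ) (x y : Fin 3 → ℝ) :
    vecMulVec (A.mulVec x) (B.mulVec y) = A * vecMulVec x y * Bᵀ := by
  ext i j
  simp [Matrix.mul_apply, vecMulVec_apply, mulVec, dotProduct, Finset.sum_mul,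
    Finset.mul_sum, Fin.sum_univ_three]
  ring

lemma vmv_neg_left (x y : Fin 3 → ℝ) : vecMulVec (-x) y = -vecMulVec x y := by
  ext i j; simp [vecMulVec_apply]

lemma vmv_neg_right (x y : Fin 3 → ℝ) : vecMulVec x (-y) = -vecMulVec x y := by
  ext i j; simp [vecMulVec_apply]

theorem relative_error_vector_hat_form (s₁₂ s₂₁ s₁₂₃ s₂₁₃ : Fin 3 → ℝ)
    (hs₂₁ : ∑ i, s₂₁ i ^ 2 = 1) (hs₂₁₃ : ∑ i, s₂₁₃ i ^ 2 = 1)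
    (h₁₂ : s₁₂ = -s₂₁) (h₁₂₃ : s₁₂₃ = -s₂₁₃)
    (R₁ R₂ Q₂₁d : Matrix (Fin 3) (Fin 3) ℝ)
    (hR₁ : IsSO3 R₁) (hR₂ : IsSO3 R₂) (hQ : IsSO3 Q₂₁d)
    (kα kβ : ℝ) (hkα : 0 < kα) (hkβ : 0 < kβ) :
    let b₁₂ := R₁ᵀ.mulVec s₁₂
    let b₂₁ := R₂ᵀ.mulVec s₂₁
    let b₁₂₃ := R₁ᵀ.mulVec s₁₂₃
    let b₂₁₃ := R₂ᵀ.mulVec s₂₁₃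
    let K₂₁ := kα • vecMulVec s₂₁ s₂₁ + kβ • vecMulVec s₂₁₃ s₂₁₃
    let e₂₁ := kα • ((Q₂₁dᵀ.mulVec b₁₂) ⨯₃ b₂₁) + kβ • ((Q₂₁dᵀ.mulVec b₁₂₃) ⨯₃ b₂₁₃)
    hat e₂₁ = Q₂₁dᵀ * R₁ᵀ * K₂₁ * R₂ - R₂ᵀ * K₂₁ * R₁ * Q₂₁d := by
  intro b₁₂ b₂₁ b₁₂₃ b₂₁₃ K₂₁ e₂₁
  have ha : ∀ (M N : Matrix (Fin 3) (Fin 3) ℝ) (u v : Fin 3 → ℝ),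
      hat ((Mᵀ.mulVec (Nᵀ.mulVec (-u))) ⨯₃ (R₂ᵀ.mulVec v)) =
      Mᵀ * Nᵀ * vecMulVec u v * R₂ - R₂ᵀ * vecMulVec v u * (N * M) := by
    intro M N u v
    rw [hat_cross, Matrix.mulVec_mulVec, Matrix.mulVec_neg, vmv_neg_left, vmv_neg_right, vmv_mulVec, vmv_mulVec]
    simp [Matrix.transpose_mul, Matrix.mul_assoc, sub_eq_neg_add, add_comm]
  show hat (kα • _ + kβ • _) = _
  rw [hat_lin]
  simp only [b₁₂, b₁₂₃, b₂₁, b₂₁₃, K₂₁, h₁₂, h₁₂₃]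
  rw [ha Q₂₁d R₁ s₂₁ s₂₁, ha Q₂₁d R₁ s₂₁₃ s₂₁₃]
  show _ = Q₂₁dᵀ * R₁ᵀ * (kα • vecMulVec s₂₁ s₂₁ + kβ • vecMulVec s₂₁₃ s₂₁₃) * R₂ -
      R₂ᵀ * (kα • vecMulVec s₂₁ s₂₁ + kβ • vecMulVec s₂₁₃ s₂₁₃) * R₁ * Q₂₁d
  simp only [Matrix.mul_add, Matrix.add_mul, Matrix.mul_smul, Matrix.smul_mul,
    smul_sub, Matrix.mul_assoc]
  abel
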